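/- arXiv:2007.12018 — 3 statements merged into one kernel-verified Lean document; each statement's English description precedes it below -/
import Mathlib

section
/- Let k be a field of characteristic 2. The cubic forms F₁ = x₁²x₄ + x₂³ + x₁x₃², F₂ = x₁²x₄ + x₂²x₃ + x₁x₃², F₃ = x₁²x₄ + x₂³ + x₃³ in k[x₁,x₂,x₃,x₄] are pairwise projectively inequivalent: there is no invertible linear change of coordinates carrying any one of them to another (even up to nonzero scalar). -/
set_option linter.unusedSectionVars false
set_option maxHeartbeats 1000000
set_option maxRecDepth 10000

namespace ThreeNormalForms

variable {k : Type*} [Field k] [CharP k 2]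

/-- exponent weights: the variable `xₜ` is sent to `X ^ (10 ^ t)`. -/
def W : Fin 4 → ℕ := fun t => 10 ^ (t : ℕ)

noncomputable def ell (a : Fin 4 → k) : Polynomial k :=
  ∑ t, Polynomial.C (a t) * Polynomial.X ^ W t

noncomputable def S (a b : Fin 4 → k) : Polynomial k := (ell a) ^ 2 * ell b

lemma expW : ∀ t u t' u' : Fin 4, 2 * W t' + W u' = 2 * W t + W u ↔ t' = t ∧ u' = u := by decide

open Polynomial in
lemma ell_sq (a : Fin 4 → k) : (ell a) ^ 2 = ∑ t, C (a t ^ 2) * X ^ (2 * W t) := by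
  rw [ell, CharTwo.sum_sq]
  refine Finset.sum_congr rfl fun t _ => ?_
  rw [mul_pow, ← C_pow, ← pow_mul, mul_comm (W t) 2]

open Polynomial in
lemma S_eq (a b : Fin 4 → k) :
    S a b = ∑ t, ∑ u, C (a t ^ 2 * b u) * X ^ (2 * W t + W u) := by
  rw [S, ell_sq, ell, Finset.sum_mul_sum]
  refine Finset.sum_congr rfl fun t _ => Finset.sum_congr rfl fun u _ => ?_
  rw [mul_mul_mul_comm, ← C_mul, ← pow_add]

open Polynomial in
lemma coeff_S (a b : Fin 4 → k) (t u : Fin 4) :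
    (S a b).coeff (2 * W t + W u) = a t ^ 2 * b u := by
  rw [S_eq, finset_sum_coeff]
  simp_rw [finset_sum_coeff, coeff_C_mul, coeff_X_pow, expW]
  rw [Finset.sum_eq_single t]
  · rw [Finset.sum_eq_single u]
    · simp
    · intro u' _ hu; simp [hu, Ne.symm hu]
    · simp
  · intro t' _ ht
    simp [ht, Ne.symm ht]
  · simp

open Polynomial in
/-- the key coefficient-extraction lemma -/
lemma key {a1 b1 a2 b2 a3 b3 : Fin 4 → k} {c : k} {t1 u1 t2 u2 t3 u3 : Fin 4}
    (h : S a1 b1 + S a2 b2 + S a3 b3 =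
      C c * (X ^ (2 * W t1 + W u1) + X ^ (2 * W t2 + W u2) + X ^ (2 * W t3 + W u3)))
    (t u : Fin 4) :
    a1 t ^ 2 * b1 u + a2 t ^ 2 * b2 u + a3 t ^ 2 * b3 u =
      c * ((if t = t1 ∧ u = u1 then 1 else 0) + (if t = t2 ∧ u = u2 then 1 else 0) +
        (if t = t3 ∧ u = u3 then 1 else 0)) := by
  have h' := congrArg (fun P : Polynomial k => P.coeff (2 * W t + W u)) h
  simpa only [coeff_add, coeff_S, coeff_C_mul, coeff_X_pow, expW] using h'

lemma null_rows (g : Matrix (Fin 4) (Fin 4) k) (hdet : IsUnit g.det) (v : Fin 4 → k)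
    (h : ∀ u, ∑ s, v s * g s u = 0) : v = 0 := by
  have hv : Matrix.vecMul v g = 0 := by
    funext u; simpa [Matrix.vecMul, dotProduct] using h u
  have h2 := congrArg (fun w => Matrix.vecMul w g⁻¹) hv
  simpa [Matrix.vecMul_vecMul, Matrix.mul_nonsing_inv g hdet] using h2

lemma det_zero (g : Matrix (Fin 4) (Fin 4) k) (h01 : g 0 1 = 0) (h02 : g 0 2 = 0)
    (h03 : g 0 3 = 0) (h13 : g 1 3 = 0) (h23 : g 2 3 = 0)
    (hps : g 1 1 * g 2 2 + g 1 2 * g 2 1 = 0) : g.det = 0 := by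
  have h2k : (2 : k) = 0 := CharTwo.two_eq_zero
  simp [Matrix.det_succ_row_zero, Fin.sum_univ_succ,
    show (Fin.succ 2 : Fin 4) = 3 from rfl, show (Fin.succ 1 : Fin 4) = 2 from rfl,
    show (Fin.succ 0 : Fin 4) = 1 from rfl,
    show (Fin.castSucc (2 : Fin 3) : Fin 4) = 2 from rfl,
    show (Fin.castSucc (1 : Fin 3) : Fin 4) = 1 from rfl,
    show (Fin.castSucc (0 : Fin 3) : Fin 4) = 0 from rfl,
    h01, h02, h03, h13, h23]
  refine Or.inr ?_
  linear_combination (g 3 3) * hps - (g 1 2 * g 2 1 * g 3 3) * h2k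

noncomputable def psi : MvPolynomial (Fin 4) k →ₐ[k] Polynomial k :=
  MvPolynomial.aeval fun i => Polynomial.X ^ W i

lemma psi_L (g : Matrix (Fin 4) (Fin 4) k) (s : Fin 4) :
    psi ((MvPolynomial.aeval (R := k)
        ((fun s => ∑ t, MvPolynomial.C (g s t) * MvPolynomial.X t) :
          Fin 4 → MvPolynomial (Fin 4) k)) (MvPolynomial.X s)) = ell (g s) := by
  simp [psi, ell, MvPolynomial.aeval_X, map_sum, Polynomial.algebraMap_eq]

open Polynomial in
lemma Xpow_sq_mul (t u : Fin 4) :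
    ((X : Polynomial k) ^ W t) ^ 2 * X ^ W u = X ^ (2 * W t + W u) := by
  rw [← pow_mul, ← pow_add, mul_comm (W t) 2]

open Polynomial in
lemma Xpow_mul_sq (t u : Fin 4) :
    (X : Polynomial k) ^ W u * ((X : Polynomial k) ^ W t) ^ 2 = X ^ (2 * W t + W u) := by
  rw [← pow_mul, ← pow_add]; congr 1; ring

open Polynomial in
lemma Xpow_cube (t : Fin 4) :
    ((X : Polynomial k) ^ W t) ^ 3 = X ^ (2 * W t + W t) := by
  rw [← pow_mul]; congr 1; ring

section Cases

variable (g : Matrix (Fin 4) (Fin 4) k) (c : k)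

open Polynomial

/- Common first stages: from the coefficient equations we always get
  `g 0 3 = g 1 3 = g 2 3 = 0`, then `g 0 0 ^ 2 * g 3 3 = c`, `g 0 1 = g 0 2 = 0`. -/

/-- Case i = 0, j = 1 : `F₁ ↛ F₂`. -/
lemma case01 (hdet : IsUnit g.det) (hc : c ≠ 0)
    (hm : S (g 0) (g 3) + S (g 1) (g 1) + S (g 2) (g 0) =
      C c * (X ^ (2 * W 0 + W 3) + X ^ (2 * W 1 + W 2) + X ^ (2 * W 2 + W 0))) : False := by
  have K := key hm
  have e30 := K 3 0; have e31 := K 3 1; have e32 := K 3 2; have e33 := K 3 3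
  simp (config := { decide := true }) at e30 e31 e32 e33
  have hv : (![g 2 3 ^ 2, g 1 3 ^ 2, 0, g 0 3 ^ 2] : Fin 4 → k) = 0 := by
    refine null_rows g hdet _ ?_
    intro u
    fin_cases u
    · simp [Fin.sum_univ_four]; linear_combination e30
    · simp [Fin.sum_univ_four]; linear_combination e31
    · simp [Fin.sum_univ_four]; linear_combination e32
    · simp [Fin.sum_univ_four]; linear_combination e33
  have h03 : g 0 3 = 0 := by simpa using congrFun hv 3
  have h13 : g 1 3 = 0 := by simpa using congrFun hv 1
  have h23 : g 2 3 = 0 := by simpa using congrFun hv 0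
  have e03 := K 0 3; have e13 := K 1 3; have e23 := K 2 3
  simp (config := { decide := true }) [h03, h13, h23] at e03 e13 e23
  have h33 : g 3 3 ≠ 0 := by
    intro h; rw [h] at e03; simp at e03; exact hc e03.symm
  have h01 : g 0 1 = 0 := e13.resolve_right h33
  have h02 : g 0 2 = 0 := e23.resolve_right h33
  have e11 := K 1 1; have e12 := K 1 2
  simp (config := { decide := true }) [h01, h02] at e11 e12
  rw [e11] at e12
  simp at e12
  exact hc e12.symm

/-- Case i = 0, j = 2 : `F₁ ↛ F₃`. -/
lemma case02 (hdet : IsUnit g.det) (hc : c ≠ 0)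
    (hm : S (g 0) (g 3) + S (g 1) (g 1) + S (g 2) (g 0) =
      C c * (X ^ (2 * W 0 + W 3) + X ^ (2 * W 1 + W 1) + X ^ (2 * W 2 + W 2))) : False := by
  have K := key hm
  have e30 := K 3 0; have e31 := K 3 1; have e32 := K 3 2; have e33 := K 3 3
  simp (config := { decide := true }) at e30 e31 e32 e33
  have hv : (![g 2 3 ^ 2, g 1 3 ^ 2, 0, g 0 3 ^ 2] : Fin 4 → k) = 0 := by
    refine null_rows g hdet _ ?_
    intro u
    fin_cases u
    · simp [Fin.sum_univ_four]; linear_combination e30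
    · simp [Fin.sum_univ_four]; linear_combination e31
    · simp [Fin.sum_univ_four]; linear_combination e32
    · simp [Fin.sum_univ_four]; linear_combination e33
  have h03 : g 0 3 = 0 := by simpa using congrFun hv 3
  have h13 : g 1 3 = 0 := by simpa using congrFun hv 1
  have h23 : g 2 3 = 0 := by simpa using congrFun hv 0
  have e03 := K 0 3; have e13 := K 1 3; have e23 := K 2 3
  simp (config := { decide := true }) [h03, h13, h23] at e03 e13 e23
  have h33 : g 3 3 ≠ 0 := by
    intro h; rw [h] at e03; simp at e03; exact hc e03.symm
  have h01 : g 0 1 = 0 := e13.resolve_right h33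
  have h02 : g 0 2 = 0 := e23.resolve_right h33
  have e11 := K 1 1; have e12 := K 1 2; have e22 := K 2 2
  simp (config := { decide := true }) [h01, h02] at e11 e12 e22
  -- e11 : g 1 1 ^ 2 * g 1 1 = c, e12 : g 1 1 = 0 ∨ g 1 2 = 0, e22 : g 1 2 ^2 * g 1 2 = c
  rcases e12 with h | h
  · rw [h] at e11; simp at e11; exact hc e11.symm
  · rw [h] at e22; simp at e22; exact hc e22.symm

/-- Case i = 1, j = 0 : `F₂ ↛ F₁`. -/
lemma case10 (hdet : IsUnit g.det) (hc : c ≠ 0)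
    (hm : S (g 0) (g 3) + S (g 1) (g 2) + S (g 2) (g 0) =
      C c * (X ^ (2 * W 0 + W 3) + X ^ (2 * W 1 + W 1) + X ^ (2 * W 2 + W 0))) : False := by
  have K := key hm
  have e30 := K 3 0; have e31 := K 3 1; have e32 := K 3 2; have e33 := K 3 3
  simp (config := { decide := true }) at e30 e31 e32 e33
  have hv : (![g 2 3 ^ 2, 0, g 1 3 ^ 2, g 0 3 ^ 2] : Fin 4 → k) = 0 := by
    refine null_rows g hdet _ ?_
    intro u
    fin_cases u
    · simp [Fin.sum_univ_four]; linear_combination e30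
    · simp [Fin.sum_univ_four]; linear_combination e31
    · simp [Fin.sum_univ_four]; linear_combination e32
    · simp [Fin.sum_univ_four]; linear_combination e33
  have h03 : g 0 3 = 0 := by simpa using congrFun hv 3
  have h13 : g 1 3 = 0 := by simpa using congrFun hv 2
  have h23 : g 2 3 = 0 := by simpa using congrFun hv 0
  have e03 := K 0 3; have e13 := K 1 3; have e23 := K 2 3
  simp (config := { decide := true }) [h03, h13, h23] at e03 e13 e23
  have h33 : g 3 3 ≠ 0 := by
    intro h; rw [h] at e03; simp at e03; exact hc e03.symm
  have h01 : g 0 1 = 0 := e13.resolve_right h33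
  have h02 : g 0 2 = 0 := e23.resolve_right h33
  have e11 := K 1 1; have e12 := K 1 2; have e21 := K 2 1; have e22 := K 2 2
  simp (config := { decide := true }) [h01, h02] at e11 e12 e21 e22
  -- e11 : g 1 1 ^2 * g 2 1 = c, e12 : g 1 1 = 0 ∨ g 2 2 = 0,
  -- e21 : g 1 2 = 0 ∨ g 2 1 = 0, e22 : g 1 2 = 0 ∨ g 2 2 = 0
  have h11 : g 1 1 ≠ 0 := by
    intro h; rw [h] at e11; simp at e11; exact hc e11.symm
  have h21 : g 2 1 ≠ 0 := by
    intro h; rw [h] at e11; simp at e11; exact hc e11.symm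
  have hq : g 1 2 = 0 := e21.resolve_right h21
  have hs : g 2 2 = 0 := e12.resolve_left h11
  have : g.det = 0 := det_zero g h01 h02 h03 h13 h23 (by rw [hq, hs]; ring)
  rw [this] at hdet
  exact (not_isUnit_zero : ¬ IsUnit (0 : k)) hdet

/-- Case i = 1, j = 2 : `F₂ ↛ F₃`. -/
lemma case12 (hdet : IsUnit g.det) (hc : c ≠ 0)
    (hm : S (g 0) (g 3) + S (g 1) (g 2) + S (g 2) (g 0) =
      C c * (X ^ (2 * W 0 + W 3) + X ^ (2 * W 1 + W 1) + X ^ (2 * W 2 + W 2))) : False := by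
  have K := key hm
  have e30 := K 3 0; have e31 := K 3 1; have e32 := K 3 2; have e33 := K 3 3
  simp (config := { decide := true }) at e30 e31 e32 e33
  have hv : (![g 2 3 ^ 2, 0, g 1 3 ^ 2, g 0 3 ^ 2] : Fin 4 → k) = 0 := by
    refine null_rows g hdet _ ?_
    intro u
    fin_cases u
    · simp [Fin.sum_univ_four]; linear_combination e30
    · simp [Fin.sum_univ_four]; linear_combination e31
    · simp [Fin.sum_univ_four]; linear_combination e32
    · simp [Fin.sum_univ_four]; linear_combination e33
  have h03 : g 0 3 = 0 := by simpa using congrFun hv 3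
  have h13 : g 1 3 = 0 := by simpa using congrFun hv 2
  have h23 : g 2 3 = 0 := by simpa using congrFun hv 0
  have e03 := K 0 3; have e13 := K 1 3; have e23 := K 2 3
  simp (config := { decide := true }) [h03, h13, h23] at e03 e13 e23
  have h33 : g 3 3 ≠ 0 := by
    intro h; rw [h] at e03; simp at e03; exact hc e03.symm
  have h01 : g 0 1 = 0 := e13.resolve_right h33
  have h02 : g 0 2 = 0 := e23.resolve_right h33
  have e11 := K 1 1; have e12 := K 1 2; have e22 := K 2 2
  simp (config := { decide := true }) [h01, h02] at e11 e12 e22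
  -- e11 : g 1 1 ^2 * g 2 1 = c, e12 : g 1 1 = 0 ∨ g 2 2 = 0, e22 : g 1 2 ^2 * g 2 2 = c
  have h11 : g 1 1 ≠ 0 := by
    intro h; rw [h] at e11; simp at e11; exact hc e11.symm
  have hs : g 2 2 = 0 := e12.resolve_left h11
  rw [hs] at e22; simp at e22; exact hc e22.symm

/-- Case i = 2, j = 0 : `F₃ ↛ F₁`. -/
lemma case20 (hdet : IsUnit g.det) (hc : c ≠ 0)
    (hm : S (g 0) (g 3) + S (g 1) (g 1) + S (g 2) (g 2) =
      C c * (X ^ (2 * W 0 + W 3) + X ^ (2 * W 1 + W 1) + X ^ (2 * W 2 + W 0))) : False := by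
  have h2k : (2 : k) = 0 := CharTwo.two_eq_zero
  have K := key hm
  have e30 := K 3 0; have e31 := K 3 1; have e32 := K 3 2; have e33 := K 3 3
  simp (config := { decide := true }) at e30 e31 e32 e33
  have hv : (![0, g 1 3 ^ 2, g 2 3 ^ 2, g 0 3 ^ 2] : Fin 4 → k) = 0 := by
    refine null_rows g hdet _ ?_
    intro u
    fin_cases u
    · simp [Fin.sum_univ_four]; linear_combination e30
    · simp [Fin.sum_univ_four]; linear_combination e31
    · simp [Fin.sum_univ_four]; linear_combination e32
    · simp [Fin.sum_univ_four]; linear_combination e33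
  have h03 : g 0 3 = 0 := by simpa using congrFun hv 3
  have h13 : g 1 3 = 0 := by simpa using congrFun hv 1
  have h23 : g 2 3 = 0 := by simpa using congrFun hv 2
  have e03 := K 0 3; have e13 := K 1 3; have e23 := K 2 3
  simp (config := { decide := true }) [h03, h13, h23] at e03 e13 e23
  have h33 : g 3 3 ≠ 0 := by
    intro h; rw [h] at e03; simp at e03; exact hc e03.symm
  have h01 : g 0 1 = 0 := e13.resolve_right h33
  have h02 : g 0 2 = 0 := e23.resolve_right h33
  have e21 := K 2 1; have e22 := K 2 2
  simp (config := { decide := true }) [h01, h02] at e21 e22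
  -- e21 : g 1 2 ^2 * g 1 1 + g 2 2 ^2 * g 2 1 = 0, e22 : g 1 2 ^3 + g 2 2 ^3 = 0
  have hps3 : (g 1 1 * g 2 2 + g 1 2 * g 2 1) ^ 3 = 0 := by
    linear_combination (g 1 1 ^ 3 + g 2 1 ^ 3) * e22 +
      (g 1 1 ^ 2 * g 1 2 + g 2 1 ^ 2 * g 2 2) * e21 +
      (g 1 1 ^ 2 * g 1 2 * g 2 1 * g 2 2 ^ 2 + g 1 1 * g 1 2 ^ 2 * g 2 1 ^ 2 * g 2 2
        - g 1 1 ^ 3 * g 1 2 ^ 3 - g 2 1 ^ 3 * g 2 2 ^ 3) * h2k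
  have hps : g 1 1 * g 2 2 + g 1 2 * g 2 1 = 0 :=
    pow_eq_zero_iff three_ne_zero |>.mp hps3
  have : g.det = 0 := det_zero g h01 h02 h03 h13 h23 hps
  rw [this] at hdet
  exact (not_isUnit_zero : ¬ IsUnit (0 : k)) hdet

/-- Case i = 2, j = 1 : `F₃ ↛ F₂`. -/
lemma case21 (hdet : IsUnit g.det) (hc : c ≠ 0)
    (hm : S (g 0) (g 3) + S (g 1) (g 1) + S (g 2) (g 2) =
      C c * (X ^ (2 * W 0 + W 3) + X ^ (2 * W 1 + W 2) + X ^ (2 * W 2 + W 0))) : False := by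
  have h2k : (2 : k) = 0 := CharTwo.two_eq_zero
  have K := key hm
  have e30 := K 3 0; have e31 := K 3 1; have e32 := K 3 2; have e33 := K 3 3
  simp (config := { decide := true }) at e30 e31 e32 e33
  have hv : (![0, g 1 3 ^ 2, g 2 3 ^ 2, g 0 3 ^ 2] : Fin 4 → k) = 0 := by
    refine null_rows g hdet _ ?_
    intro u
    fin_cases u
    · simp [Fin.sum_univ_four]; linear_combination e30
    · simp [Fin.sum_univ_four]; linear_combination e31
    · simp [Fin.sum_univ_four]; linear_combination e32
    · simp [Fin.sum_univ_four]; linear_combination e33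
  have h03 : g 0 3 = 0 := by simpa using congrFun hv 3
  have h13 : g 1 3 = 0 := by simpa using congrFun hv 1
  have h23 : g 2 3 = 0 := by simpa using congrFun hv 2
  have e03 := K 0 3; have e13 := K 1 3; have e23 := K 2 3
  simp (config := { decide := true }) [h03, h13, h23] at e03 e13 e23
  have h33 : g 3 3 ≠ 0 := by
    intro h; rw [h] at e03; simp at e03; exact hc e03.symm
  have h01 : g 0 1 = 0 := e13.resolve_right h33
  have h02 : g 0 2 = 0 := e23.resolve_right h33
  have e11 := K 1 1; have e12 := K 1 2; have e21 := K 2 1; have e22 := K 2 2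
  simp (config := { decide := true }) [h01, h02] at e11 e12 e21 e22
  -- e11 : g11³+g21³ = 0, e12 : g11²g12+g21²g22 = c, e21 : g12²g11+g22²g21 = 0, e22 : g12³+g22³=0
  have hps3 : (g 1 1 * g 2 2 + g 1 2 * g 2 1) ^ 3 = 0 := by
    linear_combination (g 1 2 ^ 3 + g 2 2 ^ 3) * e11 +
      (g 1 1 * g 1 2 ^ 2 + g 2 1 * g 2 2 ^ 2) * e12 + c * e21 +
      (g 1 1 ^ 2 * g 1 2 * g 2 1 * g 2 2 ^ 2 + g 1 1 * g 1 2 ^ 2 * g 2 1 ^ 2 * g 2 2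
        - g 1 1 ^ 3 * g 1 2 ^ 3 - g 2 1 ^ 3 * g 2 2 ^ 3) * h2k
  have hps : g 1 1 * g 2 2 + g 1 2 * g 2 1 = 0 :=
    pow_eq_zero_iff three_ne_zero |>.mp hps3
  have : g.det = 0 := det_zero g h01 h02 h03 h13 h23 hps
  rw [this] at hdet
  exact (not_isUnit_zero : ¬ IsUnit (0 : k)) hdet

end Cases

end ThreeNormalForms

open MvPolynomial

/-- in characteristic 2, the cubic forms
`F₁ = x₁²x₄+x₂³+x₁x₃²`, `F₂ = x₁²x₄+x₂²x₃+x₁x₃²`, `F₃ = x₁²x₄+x₂³+x₃³` are pairwise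
projectively inequivalent: no invertible linear substitution carries one to a nonzero
scalar multiple of another. -/
theorem three_normal_forms_pairwise_inequivalent
    (k : Type*) [Field k] [CharP k 2]
    (F : Fin 3 → MvPolynomial (Fin 4) k)
    (hF0 : F 0 = X 0 ^ 2 * X 3 + X 1 ^ 3 + X 0 * X 2 ^ 2)
    (hF1 : F 1 = X 0 ^ 2 * X 3 + X 1 ^ 2 * X 2 + X 0 * X 2 ^ 2)
    (hF2 : F 2 = X 0 ^ 2 * X 3 + X 1 ^ 3 + X 2 ^ 3) :
    ∀ i j : Fin 3, i ≠ j →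
      ¬ ∃ (g : Matrix (Fin 4) (Fin 4) k) (c : k), IsUnit g.det ∧ c ≠ 0 ∧
        aeval (fun s => ∑ t, C (g s t) * X t) (F i) = C c * F j := by
  intro i j hij ⟨g, c, hdet, hc, heq⟩
  open ThreeNormalForms in
  fin_cases i <;> fin_cases j <;>
    simp only [show (⟨0, by omega⟩ : Fin 3) = 0 from rfl, show (⟨1, by omega⟩ : Fin 3) = 1 from rfl,
      show (⟨2, by omega⟩ : Fin 3) = 2 from rfl] at heq
  · exact hij rfl
  · -- i = 0, j = 1
    rw [hF0, hF1] at heq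
    have h := congrArg ThreeNormalForms.psi heq
    simp only [map_add, map_mul, map_pow, ThreeNormalForms.psi_L, MvPolynomial.aeval_C] at h
    simp only [ThreeNormalForms.psi, MvPolynomial.aeval_X, MvPolynomial.aeval_C,
      Polynomial.algebraMap_eq, ThreeNormalForms.Xpow_sq_mul, ThreeNormalForms.Xpow_mul_sq,
      ThreeNormalForms.Xpow_cube] at h
    refine ThreeNormalForms.case01 g c hdet hc ?_
    rw [ThreeNormalForms.S, ThreeNormalForms.S, ThreeNormalForms.S]
    linear_combination h
  · -- i = 0, j = 2
    rw [hF0, hF2] at heq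
    have h := congrArg ThreeNormalForms.psi heq
    simp only [map_add, map_mul, map_pow, ThreeNormalForms.psi_L, MvPolynomial.aeval_C] at h
    simp only [ThreeNormalForms.psi, MvPolynomial.aeval_X, MvPolynomial.aeval_C,
      Polynomial.algebraMap_eq, ThreeNormalForms.Xpow_sq_mul, ThreeNormalForms.Xpow_mul_sq,
      ThreeNormalForms.Xpow_cube] at h
    refine ThreeNormalForms.case02 g c hdet hc ?_
    rw [ThreeNormalForms.S, ThreeNormalForms.S, ThreeNormalForms.S]
    linear_combination h
  · -- i = 1, j = 0
    rw [hF1, hF0] at heq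
    have h := congrArg ThreeNormalForms.psi heq
    simp only [map_add, map_mul, map_pow, ThreeNormalForms.psi_L, MvPolynomial.aeval_C] at h
    simp only [ThreeNormalForms.psi, MvPolynomial.aeval_X, MvPolynomial.aeval_C,
      Polynomial.algebraMap_eq, ThreeNormalForms.Xpow_sq_mul, ThreeNormalForms.Xpow_mul_sq,
      ThreeNormalForms.Xpow_cube] at h
    refine ThreeNormalForms.case10 g c hdet hc ?_
    rw [ThreeNormalForms.S, ThreeNormalForms.S, ThreeNormalForms.S]
    linear_combination h
  · exact hij rfl
  · -- i = 1, j = 2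
    rw [hF1, hF2] at heq
    have h := congrArg ThreeNormalForms.psi heq
    simp only [map_add, map_mul, map_pow, ThreeNormalForms.psi_L, MvPolynomial.aeval_C] at h
    simp only [ThreeNormalForms.psi, MvPolynomial.aeval_X, MvPolynomial.aeval_C,
      Polynomial.algebraMap_eq, ThreeNormalForms.Xpow_sq_mul, ThreeNormalForms.Xpow_mul_sq,
      ThreeNormalForms.Xpow_cube] at h
    refine ThreeNormalForms.case12 g c hdet hc ?_
    rw [ThreeNormalForms.S, ThreeNormalForms.S, ThreeNormalForms.S]
    linear_combination h
  · -- i = 2, j = 0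
    rw [hF2, hF0] at heq
    have h := congrArg ThreeNormalForms.psi heq
    simp only [map_add, map_mul, map_pow, ThreeNormalForms.psi_L, MvPolynomial.aeval_C] at h
    simp only [ThreeNormalForms.psi, MvPolynomial.aeval_X, MvPolynomial.aeval_C,
      Polynomial.algebraMap_eq, ThreeNormalForms.Xpow_sq_mul, ThreeNormalForms.Xpow_mul_sq,
      ThreeNormalForms.Xpow_cube] at h
    refine ThreeNormalForms.case20 g c hdet hc ?_
    rw [ThreeNormalForms.S, ThreeNormalForms.S, ThreeNormalForms.S]
    linear_combination h
  · -- i = 2, j = 1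
    rw [hF2, hF1] at heq
    have h := congrArg ThreeNormalForms.psi heq
    simp only [map_add, map_mul, map_pow, ThreeNormalForms.psi_L, MvPolynomial.aeval_C] at h
    simp only [ThreeNormalForms.psi, MvPolynomial.aeval_X, MvPolynomial.aeval_C,
      Polynomial.algebraMap_eq, ThreeNormalForms.Xpow_sq_mul, ThreeNormalForms.Xpow_mul_sq,
      ThreeNormalForms.Xpow_cube] at h
    refine ThreeNormalForms.case21 g c hdet hc ?_
    rw [ThreeNormalForms.S, ThreeNormalForms.S, ThreeNormalForms.S]
    linear_combination h
  · exact hij rfl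
end

section
/- Let k be a field of characteristic 2, let f = x²L₁ + y²L₂ + z²L₃ ∈ k[x,y,z] with coefficient matrix A of rank 3 (i.e., L₁, L₂, L₃ linearly independent). Then the projective plane curve {f = 0} is smooth. Conversely, if rank(A) ≤ 2, the curve defined by f is singular. -/
open MvPolynomial Matrix

/-- for `f = x²L₁+y²L₂+z²L₃` over a perfect field of characteristic 2
with coefficient matrix A: if `rank A = 3` the projective curve `{f = 0}` is smooth
(the partials have no common nonzero zero), and if `rank A ≤ 2` it is singular. -/
theorem ternary_cubic_smooth_iff_rank_three
    (k : Type*) [Field k] [ExpChar k 2] [PerfectRing k 2]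
    (A : Matrix (Fin 3) (Fin 3) k) (L : Fin 3 → MvPolynomial (Fin 3) k)
    (hL : ∀ i, L i = ∑ j, C (A i j) * X j)
    (f : MvPolynomial (Fin 3) k) (hf : f = ∑ i, X i ^ 2 * L i) :
    (A.rank = 3 → ∀ v : Fin 3 → k, (∀ j, eval v (pderiv j f) = 0) → v = 0) ∧
    (A.rank ≤ 2 → ∃ v : Fin 3 → k, v ≠ 0 ∧ eval v f = 0 ∧
      ∀ j, eval v (pderiv j f) = 0) := by
  have h2 : (2 : k) = 0 := by
    obtain _ | ⟨hp⟩ := ‹ExpChar k 2›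
    exact CharP.cast_eq_zero k 2
  -- key computation of the partial derivatives
  have hpd : ∀ (j : Fin 3) (v : Fin 3 → k),
      eval v (pderiv j f) = Aᵀ.mulVec (fun i => v i ^ 2) j := by
    intro j v
    subst hf
    simp only [hL, map_sum, pderiv_mul, pderiv_X, Pi.single_apply]
    simp [apply_ite, h2, Finset.sum_ite_eq, Matrix.mulVec, dotProduct,
      Matrix.transpose_apply, mul_comm]
  have hev : ∀ v : Fin 3 → k,
      eval v f = ∑ j, Aᵀ.mulVec (fun i => v i ^ 2) j * v j := by
    intro v
    subst hf
    simp only [hL, Matrix.mulVec, dotProduct, Matrix.transpose_apply]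
    simp [Finset.mul_sum, Finset.sum_mul]
    rw [Finset.sum_comm]
    congr 1; ext i; congr 1; ext j; ring
  have hfr := LinearMap.finrank_range_add_finrank_ker (Matrix.mulVecLin Aᵀ)
  have hfin : Module.finrank k (Fin 3 → k) = 3 := by simp
  constructor
  · intro hr v hv
    have hker : LinearMap.ker (Matrix.mulVecLin Aᵀ) = ⊥ := by
      have hr' : Aᵀ.rank = 3 := by rw [Matrix.rank_transpose]; exact hr
      rw [Matrix.rank] at hr'
      rw [hr'] at hfr
      rw [hfin] at hfr
      exact Submodule.finrank_eq_zero.mp (by omega)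
    have : Aᵀ.mulVec (fun i => v i ^ 2) = 0 := by
      ext j; rw [← hpd j v]; exact hv j
    have hz : (fun i => v i ^ 2) = (0 : Fin 3 → k) := by
      rw [LinearMap.ker_eq_bot] at hker
      refine hker ?_
      rw [Matrix.mulVecLin_apply, this, map_zero]
    funext i
    have := congrFun hz i
    simpa [pow_eq_zero_iff] using this
  · intro hr
    have hker : LinearMap.ker (Matrix.mulVecLin Aᵀ) ≠ ⊥ := by
      intro h
      rw [h, finrank_bot] at hfr
      rw [hfin] at hfr
      have hr' : Aᵀ.rank ≤ 2 := by rw [Matrix.rank_transpose]; exact hr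
      rw [Matrix.rank] at hr'
      omega
    obtain ⟨w, hwmem, hw0⟩ := Submodule.ne_bot_iff _ |>.mp hker
    have hw : Aᵀ.mulVec w = 0 := by
      rw [← Matrix.mulVecLin_apply]
      exact LinearMap.mem_ker.mp hwmem
    refine ⟨fun i => (frobeniusEquiv k 2).symm (w i), ?_, ?_, ?_⟩
    · intro h
      apply hw0
      funext i
      have hv := congrFun h i
      have : w i = frobenius k 2 ((frobeniusEquiv k 2).symm (w i)) :=
        (frobenius_apply_frobeniusEquiv_symm k 2 (w i)).symm
      rw [this, hv]
      simp
    · rw [hev]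
      have hsq : (fun i => ((frobeniusEquiv k 2).symm (w i)) ^ 2) = w := by
        funext i
        simpa [frobenius_def] using frobenius_apply_frobeniusEquiv_symm k 2 (w i)
      rw [hsq, hw]
      simp
    · intro j
      rw [hpd]
      have hsq : (fun i => ((frobeniusEquiv k 2).symm (w i)) ^ 2) = w := by
        funext i
        simpa [frobenius_def] using frobenius_apply_frobeniusEquiv_symm k 2 (w i)
      rw [hsq, hw]
      rfl
end

section
/- Let k be an algebraically closed field of characteristic 2 and let f = x₁²L₁ + x₂²L₂ + x₃²L₃ + x₄²L₄ ∈ k[x₁,x₂,x₃,x₄] where the coefficient matrix A has rank 2. Then there exist linearly independent linear forms M₁, M₂ and linear forms N₁, N₂ such that f = M₁²N₁ + M₂²N₂. If moreover {M₁,M₂,N₁,N₂} are linearly independent, then f is linearly equivalent to x₁²x₃ + x₂²x₄. -/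
open MvPolynomial

set_option linter.unusedSectionVars false



private lemma degree_one_single {σ : Type*} {m : σ →₀ ℕ} (hm : m.degree = 1) :
    ∃ t, m = Finsupp.single t 1 := by
  classical
  have h0 : m ≠ 0 := by
    rintro rfl; simp [map_zero] at hm
  obtain ⟨t, ht⟩ := Finsupp.support_nonempty_iff.mpr h0
  refine ⟨t, ?_⟩
  have h1 : m t ≤ 1 := hm ▸ Finsupp.le_degree t m
  have h2 : 1 ≤ m t := Nat.one_le_iff_ne_zero.mpr (Finsupp.mem_support_iff.mp ht)
  rw [Finsupp.eq_single_iff]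
  refine ⟨fun s hs => ?_, by omega⟩
  simp only [Finset.mem_singleton]
  by_contra hst
  have hsub : ({s, t} : Finset σ) ⊆ m.support := by
    intro x hx
    simp only [Finset.mem_insert, Finset.mem_singleton] at hx
    rcases hx with rfl | rfl <;> [exact hs; exact ht]
  have := Finset.sum_le_sum_of_subset hsub (f := m)
  rw [Finset.sum_pair hst] at this
  have hms : 1 ≤ m s := Nat.one_le_iff_ne_zero.mpr (Finsupp.mem_support_iff.mp hs)
  have : m s + m t ≤ m.degree := this
  omega

private lemma degree_single' {σ : Type*} (t : σ) : (Finsupp.single t 1 : σ →₀ ℕ).degree = 1 := by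
  classical
  exact Finsupp.degree_single t 1

private lemma hom1_rep {k : Type*} [CommSemiring k] {p : MvPolynomial (Fin 4) k}
    (hp : p.IsHomogeneous 1) :
    p = ∑ t, C (coeff (Finsupp.single t 1) p) * X t := by
  ext m
  rw [MvPolynomial.coeff_sum]
  simp only [coeff_C_mul, coeff_X']
  by_cases hm : m.degree = 1
  · obtain ⟨t₀, rfl⟩ := degree_one_single hm
    rw [Finset.sum_eq_single t₀]
    · simp
    · intro b _ hb
      rw [if_neg, mul_zero]
      intro h
      exact hb ((Finsupp.single_left_inj one_ne_zero).mp h)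
    · simp
  · rw [hp.coeff_eq_zero hm]
    refine (Finset.sum_eq_zero fun t _ => ?_).symm
    rw [if_neg, mul_zero]
    rintro rfl
    exact hm (degree_single' t)

private lemma coeff_sum_lin {k : Type*} [CommSemiring k] (v : Fin 4 → k) (t : Fin 4) :
    coeff (Finsupp.single t 1) (∑ j, C (v j) * X j) = v t := by
  rw [MvPolynomial.coeff_sum]
  simp only [coeff_C_mul, coeff_X']
  rw [Finset.sum_eq_single t]
  · simp
  · intro b _ hb
    rw [if_neg, mul_zero]
    intro h
    exact hb ((Finsupp.single_left_inj one_ne_zero).mp h)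
  · simp

private noncomputable def lform (k : Type*) [CommSemiring k] :
    (Fin 4 → k) →ₗ[k] MvPolynomial (Fin 4) k where
  toFun v := ∑ j, C (v j) * X j
  map_add' u v := by
    simp only [Pi.add_apply, map_add, add_mul, Finset.sum_add_distrib]
  map_smul' a v := by
    simp only [Pi.smul_apply, smul_eq_mul, map_mul, RingHom.id_apply,
      MvPolynomial.smul_eq_C_mul, Finset.mul_sum, mul_assoc]

section
variable {k : Type*} [Field k] [IsAlgClosed k] [CharP k 2]

private lemma part1 (A : Matrix (Fin 4) (Fin 4) k) (L : Fin 4 → MvPolynomial (Fin 4) k)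
    (hL : ∀ i, L i = ∑ j, C (A i j) * X j)
    (hrank : A.rank = 2)
    (f : MvPolynomial (Fin 4) k) (hf : f = ∑ i, X i ^ 2 * L i) :
    ∃ M₁ M₂ N₁ N₂ : MvPolynomial (Fin 4) k,
      M₁.IsHomogeneous 1 ∧ M₂.IsHomogeneous 1 ∧ N₁.IsHomogeneous 1 ∧ N₂.IsHomogeneous 1 ∧
      LinearIndependent k ![M₁, M₂] ∧ f = M₁ ^ 2 * N₁ + M₂ ^ 2 * N₂ := by
  classical
  -- square roots
  have sqrt : ∀ a : k, ∃ b : k, b ^ 2 = a := fun a =>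
    IsAlgClosed.exists_pow_nat_eq a zero_lt_two
  choose r hr using sqrt
  have hr0 : r 0 = 0 := by
    have := hr 0
    exact pow_eq_zero_iff two_ne_zero |>.mp this
  have hr1 : r 1 = 1 := by
    have h := hr 1
    have h2 : (r 1 + 1) ^ 2 = 0 := by
      rw [CharTwo.add_sq, h, one_pow, CharTwo.add_self_eq_zero]
    have h3 : r 1 + 1 = 0 := pow_eq_zero_iff two_ne_zero |>.mp h2
    have h4 : r 1 = -1 := eq_neg_of_add_eq_zero_left h3
    rw [h4, CharTwo.neg_eq]
  -- rows
  have hrow : Module.finrank k (Submodule.span k (Set.range A)) = 2 := by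
    exact (Matrix.rank_eq_finrank_span_row A).symm.trans hrank
  obtain ⟨b, hbsub, hbspan, hbind⟩ := exists_linearIndependent k (Set.range A)
  haveI : Fintype b := (Set.Finite.subset (Set.finite_range A) hbsub).fintype
  have hcard : b.toFinset.card = 2 := by
    rw [← finrank_span_set_eq_card hbind, hbspan, hrow]
  obtain ⟨v₀, v₁, hv01, hbeq⟩ := Finset.card_eq_two.mp hcard
  have hv₀b : v₀ ∈ b := by
    rw [← Set.mem_toFinset, hbeq]; simp
  have hv₁b : v₁ ∈ b := by
    rw [← Set.mem_toFinset, hbeq]; simp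
  obtain ⟨i₀, hi₀⟩ := hbsub hv₀b
  obtain ⟨i₁, hi₁⟩ := hbsub hv₁b
  have hbset : b = {v₀, v₁} := by
    have := congrArg (fun s : Finset (Fin 4 → k) => (s : Set (Fin 4 → k))) hbeq
    simpa [Set.coe_toFinset] using this
  have hmem : ∀ j, ∃ a c : k, a • A i₀ + c • A i₁ = A j := by
    intro j
    have hAj : A j ∈ Submodule.span k (Set.range A) :=
      Submodule.subset_span ⟨j, rfl⟩
    rw [← hbspan, hbset, ← hi₀, ← hi₁] at hAj
    exact Submodule.mem_span_pair.mp hAj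
  choose c₀ c₁ hc using hmem
  set d₀ : Fin 4 → k := fun j => if j = i₀ then 1 else if j = i₁ then 0 else c₀ j with hd₀
  set d₁ : Fin 4 → k := fun j => if j = i₀ then 0 else if j = i₁ then 1 else c₁ j with hd₁
  have hi01 : i₀ ≠ i₁ := by
    rintro rfl; exact hv01 (hi₀.symm.trans hi₁)
  have hd : ∀ j, A j = d₀ j • A i₀ + d₁ j • A i₁ := by
    intro j
    by_cases h0 : j = i₀
    · subst h0; simp [hd₀, hd₁]
    · by_cases h1 : j = i₁
      · subst h1; simp [hd₀, hd₁, h0]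
      · simp only [hd₀, hd₁, if_neg h0, if_neg h1]
        exact (hc j).symm
  refine ⟨∑ j, C (r (d₀ j)) * X j, ∑ j, C (r (d₁ j)) * X j, L i₀, L i₁,
    ?_, ?_, ?_, ?_, ?_, ?_⟩
  · exact IsHomogeneous.sum _ _ _ fun j _ => isHomogeneous_C_mul_X _ _
  · exact IsHomogeneous.sum _ _ _ fun j _ => isHomogeneous_C_mul_X _ _
  · rw [hL]; exact IsHomogeneous.sum _ _ _ fun j _ => isHomogeneous_C_mul_X _ _
  · rw [hL]; exact IsHomogeneous.sum _ _ _ fun j _ => isHomogeneous_C_mul_X _ _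
  · rw [LinearIndependent.pair_iff]
    intro s t hst
    have h₀ := congrArg (coeff (Finsupp.single i₀ 1)) hst
    have h₁ := congrArg (coeff (Finsupp.single i₁ 1)) hst
    simp only [coeff_add, coeff_smul, coeff_sum_lin, coeff_zero, smul_eq_mul] at h₀ h₁
    have e00 : d₀ i₀ = 1 := by simp [hd₀]
    have e01 : d₁ i₀ = 0 := by simp [hd₁]
    have e10 : d₀ i₁ = 0 := by simp [hd₀, hi01.symm]
    have e11 : d₁ i₁ = 1 := by simp [hd₁, hi01.symm]
    rw [e00, e01, hr0, hr1, mul_one, mul_zero, add_zero] at h₀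
    rw [e10, e11, hr0, hr1, mul_one, mul_zero, zero_add] at h₁
    exact ⟨h₀, h₁⟩
  · have hLi : ∀ i, L i = C (d₀ i) * L i₀ + C (d₁ i) * L i₁ := by
      intro i
      rw [hL i, hL i₀, hL i₁, Finset.mul_sum, Finset.mul_sum, ← Finset.sum_add_distrib]
      refine Finset.sum_congr rfl fun j _ => ?_
      have hAij : A i j = d₀ i * A i₀ j + d₁ i * A i₁ j := by
        have := congrFun (hd i) j
        simpa using this
      rw [hAij, map_add, map_mul, map_mul]
      ring
    have hsq : ∀ (d : Fin 4 → k),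
        (∑ j, C (r (d j)) * X j) ^ 2 = ∑ j, C (d j) * X j ^ 2 := by
      intro d
      rw [CharTwo.sum_sq]
      refine Finset.sum_congr rfl fun j _ => ?_
      rw [mul_pow, ← map_pow, hr]
    rw [hf, hsq, hsq, Finset.sum_mul, Finset.sum_mul, ← Finset.sum_add_distrib]
    refine Finset.sum_congr rfl fun i _ => ?_
    rw [hLi i]
    ring

end
section
variable {k : Type*} [Field k] [IsAlgClosed k] [CharP k 2]

private lemma part2 (f : MvPolynomial (Fin 4) k)
    (M₁ M₂ N₁ N₂ : MvPolynomial (Fin 4) k)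
    (h1 : M₁.IsHomogeneous 1) (h2 : M₂.IsHomogeneous 1)
    (h3 : N₁.IsHomogeneous 1) (h4 : N₂.IsHomogeneous 1)
    (hfd : f = M₁ ^ 2 * N₁ + M₂ ^ 2 * N₂)
    (hind : LinearIndependent k ![M₁, M₂, N₁, N₂]) :
    ∃ g : Matrix (Fin 4) (Fin 4) k, IsUnit g.det ∧
      aeval (fun s => ∑ t, C (g s t) * X t) f = X 0 ^ 2 * X 2 + X 1 ^ 2 * X 3 := by
  classical
  set P : Fin 4 → MvPolynomial (Fin 4) k := ![M₁, M₂, N₁, N₂] with hPdef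
  set B : Matrix (Fin 4) (Fin 4) k :=
    Matrix.of fun s t => coeff (Finsupp.single t 1) (P s) with hBdef
  have hP : ∀ s, P s = ∑ t, C (B s t) * X t := by
    intro s
    fin_cases s
    · exact hom1_rep h1
    · exact hom1_rep h2
    · exact hom1_rep h3
    · exact hom1_rep h4
  have hcomp : (lform k) ∘ (fun s => B s) = P := by
    funext s
    rw [hP s]; rfl
  have hBind : LinearIndependent k (fun s => B s) :=
    LinearIndependent.of_comp (lform k) (by rw [hcomp]; exact hind)
  have hB : IsUnit B := Matrix.linearIndependent_rows_iff_isUnit.mp hBind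
  have hBdet : IsUnit B.det := B.isUnit_iff_isUnit_det.mp hB
  refine ⟨B⁻¹, Matrix.isUnit_nonsing_inv_det B hBdet, ?_⟩
  have key : ∀ s, aeval (fun u => ∑ t, C ((B⁻¹) u t) * X t) (P s) = X s := by
    intro s
    rw [hP s, map_sum]
    simp only [map_mul, aeval_C, aeval_X, algebraMap_eq]
    calc (∑ t, C (B s t) * ∑ u, C ((B⁻¹) t u) * X u)
        = ∑ u, C ((B * B⁻¹) s u) * X u := by
          simp only [Finset.mul_sum]
          rw [Finset.sum_comm]
          refine Finset.sum_congr rfl fun u _ => ?_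
          rw [Matrix.mul_apply, map_sum, Finset.sum_mul]
          refine Finset.sum_congr rfl fun t _ => ?_
          rw [map_mul, mul_assoc]
      _ = X s := by
          rw [Matrix.mul_nonsing_inv _ hBdet]
          simp [Matrix.one_apply, apply_ite (C : k → MvPolynomial (Fin 4) k),
            ite_mul, Finset.sum_ite_eq]
  have k0 : aeval (fun u => ∑ t, C ((B⁻¹) u t) * X t) M₁ = X 0 := key 0
  have k1 : aeval (fun u => ∑ t, C ((B⁻¹) u t) * X t) M₂ = X 1 := key 1
  have k2 : aeval (fun u => ∑ t, C ((B⁻¹) u t) * X t) N₁ = X 2 := key 2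
  have k3 : aeval (fun u => ∑ t, C ((B⁻¹) u t) * X t) N₂ = X 3 := key 3
  rw [hfd, map_add, map_mul, map_mul, map_pow, map_pow, k0, k1, k2, k3]

end
/-- rank-two case in four variables over an algebraically closed field of
characteristic 2: `f = Σ xᵢ²Lᵢ` with coefficient matrix of rank 2 can be written as
`M₁²N₁ + M₂²N₂` with `M₁, M₂` independent linear forms; and whenever `M₁,M₂,N₁,N₂` are
linearly independent, `f` is linearly equivalent to `x₁²x₃ + x₂²x₄`. -/
theorem rank_two_quaternary_cubic
    (k : Type*) [Field k] [IsAlgClosed k] [CharP k 2]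
    (A : Matrix (Fin 4) (Fin 4) k) (L : Fin 4 → MvPolynomial (Fin 4) k)
    (hL : ∀ i, L i = ∑ j, C (A i j) * X j)
    (hrank : A.rank = 2)
    (f : MvPolynomial (Fin 4) k) (hf : f = ∑ i, X i ^ 2 * L i) :
    (∃ M₁ M₂ N₁ N₂ : MvPolynomial (Fin 4) k,
      M₁.IsHomogeneous 1 ∧ M₂.IsHomogeneous 1 ∧ N₁.IsHomogeneous 1 ∧ N₂.IsHomogeneous 1 ∧
      LinearIndependent k ![M₁, M₂] ∧ f = M₁ ^ 2 * N₁ + M₂ ^ 2 * N₂) ∧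
    (∀ M₁ M₂ N₁ N₂ : MvPolynomial (Fin 4) k,
      M₁.IsHomogeneous 1 → M₂.IsHomogeneous 1 → N₁.IsHomogeneous 1 → N₂.IsHomogeneous 1 →
      f = M₁ ^ 2 * N₁ + M₂ ^ 2 * N₂ →
      LinearIndependent k ![M₁, M₂, N₁, N₂] →
      ∃ g : Matrix (Fin 4) (Fin 4) k, IsUnit g.det ∧
        aeval (fun s => ∑ t, C (g s t) * X t) f = X 0 ^ 2 * X 2 + X 1 ^ 2 * X 3) := by
  exact ⟨part1 A L hL hrank f hf,
    fun M₁ M₂ N₁ N₂ h1 h2 h3 h4 hfd hind => part2 f M₁ M₂ N₁ N₂ h1 h2 h3 h4 hfd hind⟩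
end
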